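/- There do not exist a natural number m < d_1 d_2 ⋯ d_k and an orthonormal family ψ_1, …, ψ_m of product vectors, with each ψ_s ∈ T, such that the orthogonal complement of span{ψ_1, …, ψ_m} contains no nonzero product vector. In other words, T = S^⊥ does not contain any unextendable orthonormal product basis. -/

import Mathlib

open Polynomial Finset

lemma sigma_natDegree {n : ℕ} (hn : n ≠ 0) :
    (∑ i ∈ Finset.range n, (X : ℂ[X]) ^ i).natDegree = n - 1 := by
  apply le_antisymm
  · apply natDegree_sum_le_of_forall_le
    intro i hi
    simp only [natDegree_X_pow]
    simp only [Finset.mem_range] at hi; omega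
  · apply le_natDegree_of_ne_zero
    rw [finset_sum_coeff]
    simp only [coeff_X_pow]
    rw [Finset.sum_ite_eq (Finset.range n) (n-1) (fun _ => (1:ℂ))]
    simp only [Finset.mem_range, if_pos (by omega : n - 1 < n)]
    exact one_ne_zero

lemma sigma_nextCoeff {n : ℕ} (hn : 2 ≤ n) :
    (∑ i ∈ Finset.range n, (X : ℂ[X]) ^ i).nextCoeff = 1 := by
  rw [nextCoeff_of_natDegree_pos (by rw [sigma_natDegree (by omega)]; omega)]
  rw [sigma_natDegree (by omega), finset_sum_coeff]
  simp only [coeff_X_pow]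
  rw [Finset.sum_ite_eq (Finset.range n) (n-1-1) (fun _ => (1:ℂ))]
  simp [Finset.mem_range]; omega

lemma upb_key {k : ℕ} (hk : 2 ≤ k) (d : Fin k → ℕ) (hd : ∀ r, 2 ≤ d r)
    {m : ℕ} (t : Fin m → ℂ) (hinj : Function.Injective t)
    (horth : ∀ s s', s ≠ s' →
      ∏ r, (∑ j ∈ Finset.range (d r), ((starRingEnd ℂ) (t s) * t s') ^ j) = 0) :
    m ≤ ∑ r, (d r - 1) := by
  set N := ∑ r, (d r - 1) with hNdef
  have hN : k ≤ N := by
    calc k = ∑ _r : Fin k, 1 := by simp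
    _ ≤ N := Finset.sum_le_sum (fun r _ => by have := hd r; omega)
  by_contra hcon
  push_neg at hcon
  -- restrict to the first N+1 of the t's
  set t' : Fin (N+1) → ℂ := fun s => t (Fin.castLE hcon s) with ht'
  have hinj' : Function.Injective t' := fun a b h => by
    have := hinj h; exact Fin.castLE_injective _ this
  have horth' : ∀ s s' : Fin (N+1), s ≠ s' →
      ∏ r, (∑ j ∈ Finset.range (d r), ((starRingEnd ℂ) (t' s) * t' s') ^ j) = 0 := by
    intro s s' hss
    exact horth _ _ (fun h => hss (Fin.castLE_injective _ h))
  clear_value t'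
  clear ht' horth hinj hcon t
  -- the polynomial P
  set P : ℂ[X] := ∏ r, (∑ i ∈ Finset.range (d r), (X : ℂ[X]) ^ i) with hPdef
  have hmon : ∀ r : Fin k, (∑ i ∈ Finset.range (d r), (X : ℂ[X]) ^ i).Monic :=
    fun r => monic_geom_sum_X (by have := hd r; omega)
  have hPmon : P.Monic := monic_prod_of_monic _ _ (fun r _ => hmon r)
  have hPdeg : P.natDegree = N := by
    rw [hPdef, natDegree_prod _ _ (fun r _ => (hmon r).ne_zero)]
    exact Finset.sum_congr rfl (fun r _ => sigma_natDegree (by have := hd r; omega))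
  have hPnext : P.nextCoeff = (k : ℂ) := by
    rw [hPdef, Monic.nextCoeff_prod _ _ (fun r _ => hmon r)]
    rw [Finset.sum_congr rfl (fun r (_ : r ∈ Finset.univ) => sigma_nextCoeff (hd r))]
    simp
  have hPeval : ∀ z : ℂ, P.eval z = ∏ r, (∑ j ∈ Finset.range (d r), z ^ j) := by
    intro z; rw [hPdef, eval_prod]
    exact Finset.prod_congr rfl (fun r _ => by rw [eval_finset_sum]; simp
    )
  -- roots of P have modulus 1
  have habs : ∀ z : ℂ, P.eval z = 0 → ‖z‖ = 1 := by
    intro z hz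
    rw [hPeval] at hz
    obtain ⟨r, _, hr⟩ := Finset.prod_eq_zero_iff.mp hz
    have hpow : z ^ (d r) = 1 := by
      have := geom_sum_mul z (d r)
      rw [hr, zero_mul] at this
      have : z ^ d r - 1 = 0 := this.symm
      linear_combination this
    have : ‖z‖ ^ (d r) = 1 := by
      rw [← norm_pow, hpow, norm_one]
    rcases pow_eq_one_iff_cases.mp this with h | h | h
    · exact absurd h (by have := hd r; omega)
    · exact h
    · exfalso; have := norm_nonneg z; rw [h.1] at this; linarith
  -- moduli all 1
  have hmod : ∀ s s' : Fin (N+1), s ≠ s' → ‖t' s‖ * ‖t' s'‖ = 1 := by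
    intro s s' h
    have := habs _ (by rw [hPeval]; exact horth' s s' h)
    rwa [norm_mul, Complex.norm_conj] at this
  have habs1 : ∀ s, ‖t' s‖ = 1 := by
    intro s
    obtain ⟨a, ha, b, hb, hab⟩ := Finset.one_lt_card.mp
      (show 1 < (Finset.univ.erase s).card by
        rw [Finset.card_erase_of_mem (Finset.mem_univ s), Finset.card_univ, Fintype.card_fin]
        omega)
    have has : a ≠ s := Finset.ne_of_mem_erase ha
    have hbs : b ≠ s := Finset.ne_of_mem_erase hb
    have h1 := hmod s a (fun h => has h.symm)
    have h2 := hmod s b (fun h => hbs h.symm)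
    have h3 := hmod a b hab
    have hx0 : ‖t' s‖ ≠ 0 := by
      intro h; rw [h, zero_mul] at h1; exact one_ne_zero h1.symm
    have hyz : ‖t' a‖ = ‖t' b‖ :=
      mul_left_cancel₀ hx0 (h1.trans h2.symm)
    rw [← hyz] at h3
    rcases mul_self_eq_one_iff.mp h3 with h | h
    · rw [h, mul_one] at h1; exact h1
    · exfalso; have := norm_nonneg (t' a); rw [h] at this; linarith
  -- Vieta: for each s, sum of the ratios is -k
  have hsum : ∀ s : Fin (N+1), (starRingEnd ℂ) (t' s) * (∑ s', t' s') = 1 - (k : ℂ) := by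
    intro s
    set g : Fin (N+1) → ℂ := fun s' => (starRingEnd ℂ) (t' s) * t' s' with hg
    have hts : t' s ≠ 0 := by
      intro h; have := habs1 s; rw [h] at this; simp at this
    have hcs : (starRingEnd ℂ) (t' s) ≠ 0 := by simpa using hts
    have hginj : Function.Injective g := fun a b h => hinj' (mul_left_cancel₀ hcs h)
    set M : Multiset ℂ := (Finset.univ.erase s).val.map g with hM
    have hMnodup : M.Nodup := Multiset.Nodup.map hginj (Finset.univ.erase s).nodup
    have hMcard : Multiset.card M = N := by
      rw [hM, Multiset.card_map]
      rw [show Multiset.card (Finset.univ.erase s).val = (Finset.univ.erase s).card from rfl]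
      rw [Finset.card_erase_of_mem (Finset.mem_univ s), Finset.card_univ, Fintype.card_fin]
      omega
    have hMle : M ≤ P.roots := by
      rw [Multiset.le_iff_subset hMnodup]
      intro a haM
      obtain ⟨s', hs', rfl⟩ := Multiset.mem_map.mp haM
      have hs'ne : s ≠ s' := by
        intro h; exact (Finset.ne_of_mem_erase (Finset.mem_def.mpr hs')) h.symm
      rw [Polynomial.mem_roots hPmon.ne_zero, IsRoot, hPeval]
      exact horth' s s' hs'ne
    have hcard' : Multiset.card P.roots ≤ N := hPdeg ▸ P.card_roots'
    have hroots_eq : M = P.roots :=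
      Multiset.eq_of_le_of_card_le hMle (le_trans hcard' (le_of_eq hMcard.symm))
    have hfact := prod_multiset_X_sub_C_of_monic_of_roots_card_eq hPmon
      (by rw [← hroots_eq, hMcard, hPdeg])
    have hnext : P.nextCoeff = -∑ s' ∈ Finset.univ.erase s, g s' := by
      conv_lhs => rw [← hfact, ← hroots_eq, hM, Multiset.map_map]
      exact prod_X_sub_C_nextCoeff g
    rw [hPnext] at hnext
    have hgs : g s = 1 := by
      show (starRingEnd ℂ) (t' s) * t' s = 1
      have : (starRingEnd ℂ) (t' s) * t' s = ((Complex.normSq (t' s) : ℝ) : ℂ) := by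
        rw [mul_comm, Complex.mul_conj]
      rw [this, Complex.normSq_eq_norm_sq, habs1 s]; norm_num
    have herase : ∑ s' ∈ Finset.univ.erase s, g s'
        = (starRingEnd ℂ) (t' s) * (∑ s', t' s') - 1 := by
      rw [Finset.sum_erase_eq_sub (Finset.mem_univ s), hgs, hg, ← Finset.mul_sum]
    rw [herase] at hnext
    linear_combination hnext
  -- conclude
  have h01 : ((⟨0, by omega⟩ : Fin (N+1)) : Fin (N+1)) ≠ ⟨1, by omega⟩ := by
    simp [Fin.ext_iff]
  have e0 := hsum ⟨0, by omega⟩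
  have e1 := hsum ⟨1, by omega⟩
  have hSig : (∑ s', t' s') ≠ 0 := by
    intro h
    rw [h, mul_zero] at e0
    have : ((k : ℕ) : ℂ) = ((1 : ℕ) : ℂ) := by push_cast; linear_combination e0
    have := Nat.cast_inj (R := ℂ) |>.mp this
    omega
  have heq := mul_right_cancel₀ hSig (e0.trans e1.symm)
  exact h01 (hinj' ((starRingEnd ℂ).injective heq))

lemma classify {k : ℕ} (hk : 2 ≤ k) (d : Fin k → ℕ) (hd : ∀ r, 2 ≤ d r)
    (x : ∀ r, Fin (d r) → ℂ)
    (hconst : ∀ i i' : ∀ r, Fin (d r),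
      (∑ r, (i r : ℕ)) = (∑ r, (i' r : ℕ)) → ∏ r, x r (i r) = ∏ r, x r (i' r))
    (i₀ : ∀ r, Fin (d r)) (h₀ : ∏ r, x r (i₀ r) ≠ 0) :
    (∃ c t : ℂ, ∀ i : ∀ r, Fin (d r), ∏ r, x r (i r) = c * t ^ (∑ r, (i r : ℕ)))
    ∨ (∀ i : ∀ r, Fin (d r), (∃ r, (i r : ℕ) ≠ d r - 1) → ∏ r, x r (i r) = 0) := by
  classical
  have hx₀ : ∀ r, x r (i₀ r) ≠ 0 := by
    intro r h
    exact h₀ (Finset.prod_eq_zero (Finset.mem_univ r) h)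
  -- splitting products and sums over a doubly-updated index
  have hprodsplit : ∀ (p q : Fin k), p ≠ q → ∀ (v : Fin (d p)) (w : Fin (d q)),
      ∏ r, x r ((Function.update (Function.update i₀ p v) q w) r)
        = x q w * (x p v * ∏ r ∈ (Finset.univ.erase q).erase p, x r (i₀ r)) := by
    intro p q hpq v w
    rw [← Finset.mul_prod_erase Finset.univ _ (Finset.mem_univ q)]
    rw [← Finset.mul_prod_erase _ _ (Finset.mem_erase.mpr ⟨hpq, Finset.mem_univ p⟩)]
    congr 1
    · rw [Function.update_self]
    congr 1
    · rw [Function.update_of_ne hpq, Function.update_self]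
    · refine Finset.prod_congr rfl (fun r hr => ?_)
      simp only [Finset.mem_erase] at hr
      rw [Function.update_of_ne hr.2.1, Function.update_of_ne hr.1]
  have hsumsplit : ∀ (p q : Fin k), p ≠ q → ∀ (v : Fin (d p)) (w : Fin (d q)),
      ∑ r, (((Function.update (Function.update i₀ p v) q w) r : ℕ))
        = (w : ℕ) + ((v : ℕ) + ∑ r ∈ (Finset.univ.erase q).erase p, (i₀ r : ℕ)) := by
    intro p q hpq v w
    rw [← Finset.add_sum_erase Finset.univ _ (Finset.mem_univ q)]
    rw [← Finset.add_sum_erase _ _ (Finset.mem_erase.mpr ⟨hpq, Finset.mem_univ p⟩)]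
    congr 1
    · rw [Function.update_self]
    congr 1
    · rw [Function.update_of_ne hpq, Function.update_self]
    · refine Finset.sum_congr rfl (fun r hr => ?_)
      simp only [Finset.mem_erase] at hr
      rw [Function.update_of_ne hr.2.1, Function.update_of_ne hr.1]
  -- the exchange relation
  have R : ∀ (p q : Fin k), p ≠ q → ∀ (a b : ℕ) (ha : a + 1 < d p) (hb : b + 1 < d q),
      x p ⟨a+1, ha⟩ * x q ⟨b, by omega⟩ = x p ⟨a, by omega⟩ * x q ⟨b+1, hb⟩ := by
    intro p q hpq a b ha hb
    have h1 := hconst (Function.update (Function.update i₀ p ⟨a+1, ha⟩) q ⟨b, by omega⟩)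
                      (Function.update (Function.update i₀ p ⟨a, by omega⟩) q ⟨b+1, hb⟩)
      (by rw [hsumsplit p q hpq, hsumsplit p q hpq]; simp; omega)
    rw [hprodsplit p q hpq, hprodsplit p q hpq] at h1
    set C := ∏ r ∈ (Finset.univ.erase q).erase p, x r (i₀ r) with hC
    have hCne : C ≠ 0 := by
      rw [hC, Finset.prod_ne_zero_iff]
      exact fun r _ => hx₀ r
    have h2 : (x q ⟨b, by omega⟩ * x p ⟨a+1, ha⟩) * C
        = (x q ⟨b+1, hb⟩ * x p ⟨a, by omega⟩) * C := by
      rw [mul_assoc, mul_assoc]; exact h1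
    have h3 := mul_right_cancel₀ hCne h2
    linear_combination h3
  have hk0 : (0:ℕ) < k := by omega
  have hk1 : (1:ℕ) < k := by omega
  set r0 : Fin k := ⟨0, hk0⟩ with hr0
  set r1 : Fin k := ⟨1, hk1⟩ with hr1
  have hr01 : r0 ≠ r1 := by
    intro h; rw [hr0, hr1, Fin.mk.injEq] at h; omega
  by_cases hA : ∀ r, x r ⟨0, by have := hd r; omega⟩ ≠ 0
  · -- geometric case
    left
    set t : ℂ := x r0 ⟨1, by have := hd r0; omega⟩ / x r0 ⟨0, by have := hd r0; omega⟩ with ht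
    have hstep : ∀ (q : Fin k) (b : ℕ) (hb : b + 1 < d q),
        x q ⟨b+1, hb⟩ = t * x q ⟨b, by omega⟩ := by
      intro q b hb
      by_cases hq : q = r0
      · subst hq
        have eq1 : x r1 ⟨1, by have := hd r1; omega⟩ * x r0 ⟨b, by omega⟩
            = x r1 ⟨0, by have := hd r1; omega⟩ * x r0 ⟨b+1, hb⟩ :=
          R r1 r0 (Ne.symm hr01) 0 b (by have := hd r1; omega) hb
        have eq0 : x r1 ⟨1, by have := hd r1; omega⟩ * x r0 ⟨0, by have := hd r0; omega⟩
            = x r1 ⟨0, by have := hd r1; omega⟩ * x r0 ⟨1, by have := hd r0; omega⟩ :=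
          R r1 r0 (Ne.symm hr01) 0 0 (by have := hd r1; omega) (by have := hd r0; omega)
        have h2 : x r1 ⟨0, by have := hd r1; omega⟩ *
            (x r0 ⟨b+1, hb⟩ * x r0 ⟨0, by have := hd r0; omega⟩
              - x r0 ⟨1, by have := hd r0; omega⟩ * x r0 ⟨b, by omega⟩) = 0 := by
          linear_combination x r0 ⟨b, by omega⟩ * eq0 - x r0 ⟨0, by have := hd r0; omega⟩ * eq1
        have h3 := (mul_eq_zero.mp h2).resolve_left (hA r1)
        rw [ht, div_mul_eq_mul_div, eq_div_iff (hA r0)]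
        linear_combination h3
      · have eq1 : x r0 ⟨1, by have := hd r0; omega⟩ * x q ⟨b, by omega⟩
            = x r0 ⟨0, by have := hd r0; omega⟩ * x q ⟨b+1, hb⟩ :=
          R r0 q (fun h => hq h.symm) 0 b (by have := hd r0; omega) hb
        rw [ht, div_mul_eq_mul_div, eq_div_iff (hA r0)]
        linear_combination -eq1
    have hgeom : ∀ (q : Fin k) (b : ℕ) (hb : b < d q),
        x q ⟨b, hb⟩ = x q ⟨0, by omega⟩ * t ^ b := by
      intro q b
      induction b with
      | zero => intro hb; simp
      | succ n ih =>
        intro hb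
        rw [hstep q n hb, ih (by omega)]; ring
    refine ⟨∏ r, x r ⟨0, by have := hd r; omega⟩, t, fun i => ?_⟩
    calc ∏ r, x r (i r) = ∏ r, (x r ⟨0, by have := hd r; omega⟩ * t ^ (i r : ℕ)) := by
          refine Finset.prod_congr rfl (fun r _ => ?_)
          rw [show i r = ⟨(i r : ℕ), (i r).isLt⟩ from (Fin.eta _ _).symm]
          exact hgeom r (i r) (i r).isLt
    _ = (∏ r, x r ⟨0, by have := hd r; omega⟩) * ∏ r, t ^ (i r : ℕ) :=
          Finset.prod_mul_distrib
    _ = _ := by rw [Finset.prod_pow_eq_pow_sum]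
  · -- top-supported case
    right
    push_neg at hA
    obtain ⟨r2, hr2⟩ := hA
    intro i ⟨q, hq⟩
    by_contra hne
    have hxi : ∀ r, x r (i r) ≠ 0 := by
      intro r h
      exact hne (Finset.prod_eq_zero (Finset.mem_univ r) h)
    have hiq : (i q : ℕ) + 1 < d q := by
      have := (i q).isLt; omega
    have C1 : ∀ p, q ≠ p → ∀ (n b : ℕ) (hbn : b + n = (i p : ℕ)),
        x p ⟨b, by have := (i p).isLt; omega⟩ ≠ 0 := by
      intro p hqp n
      induction n with
      | zero =>
        intro b hb
        have : b = (i p : ℕ) := by omega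
        subst this
        rw [Fin.eta]
        exact hxi p
      | succ n ih =>
        intro b hb
        have hnz := ih (b+1) (by omega)
        have heq := R q p hqp (i q : ℕ) b hiq (by have := (i p).isLt; omega)
        intro h0
        rw [h0, mul_zero] at heq
        rcases mul_eq_zero.mp heq.symm with h | h
        · rw [Fin.eta] at h; exact hxi q h
        · exact hnz h
    have C2 : ∀ (n b : ℕ) (hbn : b + n = (i q : ℕ)),
        x q ⟨b, by have := (i q).isLt; omega⟩ ≠ 0 := by
      set p : Fin k := if q = r0 then r1 else r0 with hp
      have hqp : q ≠ p := by
        rw [hp]; split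
        · next h => rw [h]; exact hr01
        · next h => exact h
      have hp0 : x p ⟨0, by have := hd p; omega⟩ ≠ 0 := by
        exact C1 p hqp (i p : ℕ) 0 (by omega)
      intro n
      induction n with
      | zero =>
        intro b hb
        have : b = (i q : ℕ) := by omega
        subst this
        rw [Fin.eta]
        exact hxi q
      | succ n ih =>
        intro b hb
        have hnz := ih (b+1) (by omega)
        have heq := R p q (Ne.symm hqp) 0 b (by have := hd p; omega)
          (by have := (i q).isLt; omega)
        intro h0
        rw [h0, mul_zero] at heq
        rcases mul_eq_zero.mp heq.symm with h | h
        · exact hp0 h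
        · exact hnz h
    have hall : ∀ r, x r ⟨0, by have := hd r; omega⟩ ≠ 0 := by
      intro r
      by_cases h : q = r
      · subst h
        exact C2 (i q : ℕ) 0 (by omega)
      · exact C1 r h (i r : ℕ) 0 (by omega)
    exact hall r2 hr2

/-- `T = S^⊥` contains no unextendable orthonormal product basis: there is no orthonormal
family of fewer than `d₁⋯d_k` product vectors inside `T` whose orthocomplement contains
no nonzero product vector. -/
theorem stmt_9 (k : ℕ) (hk : 2 ≤ k) (d : Fin k → ℕ) (hd : ∀ r, 2 ≤ d r)
    (u : ℕ → EuclideanSpace ℂ (∀ r, Fin (d r)))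
    (hu : ∀ n, u n = ∑ i ∈ Finset.univ.filter
        (fun i : ∀ r, Fin (d r) => ∑ r, (i r : ℕ) = n),
      EuclideanSpace.single i (1 : ℂ)) :
    ¬ ∃ (m : ℕ) (ψ : Fin m → EuclideanSpace ℂ (∀ r, Fin (d r))),
        m < ∏ r, d r ∧
        Orthonormal ℂ ψ ∧
        (∀ s, ψ s ∈ Submodule.span ℂ (u '' Set.Iic (∑ r, (d r - 1)))) ∧
        (∀ s, ∃ x : ∀ r, Fin (d r) → ℂ, ∀ i : ∀ r, Fin (d r), ψ s i = ∏ r, x r (i r)) ∧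
        (∀ v ∈ (Submodule.span ℂ (Set.range ψ))ᗮ,
          (∃ x : ∀ r, Fin (d r) → ℂ, ∀ i : ∀ r, Fin (d r), v i = ∏ r, x r (i r)) → v = 0) := by
  classical
  rintro ⟨m, ψ, hm, horth, hT, hprod, hcomp⟩
  set N := ∑ r, (d r - 1) with hNdef
  have hNk : k ≤ N := by
    calc k = ∑ _r : Fin k, 1 := by simp
    _ ≤ N := Finset.sum_le_sum (fun r _ => by have := hd r; omega)
  have hip : ∀ f g : EuclideanSpace ℂ (∀ r, Fin (d r)),
      (inner ℂ f g : ℂ) = ∑ i, (starRingEnd ℂ) (f i) * g i := by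
    intro f g; simp [PiLp.inner_apply, RCLike.inner_apply, mul_comm]
  have horthog : ∀ s s', s ≠ s' → (inner ℂ (ψ s) (ψ s') : ℂ) = 0 := by
    intro s s' h; rw [orthonormal_iff_ite.mp horth s s', if_neg h]
  have hne : ∀ s, ψ s ≠ 0 := horth.ne_zero
  have huapp : ∀ n (i : ∀ r, Fin (d r)),
      u n i = if (∑ r, (i r : ℕ)) = n then 1 else 0 := by
    intro n i
    rw [hu]
    rw [WithLp.ofLp_sum, Finset.sum_apply i _ (fun i' => (EuclideanSpace.single i' (1 : ℂ)).ofLp)]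
    simp only [EuclideanSpace.single_apply]
    rw [Finset.sum_ite_eq]
    simp [Finset.mem_filter]
  have hconstψ : ∀ s (i i' : ∀ r, Fin (d r)),
      (∑ r, (i r : ℕ)) = (∑ r, (i' r : ℕ)) → ψ s i = ψ s i' := by
    intro s
    refine Submodule.span_induction
      (p := fun v _ => ∀ i i' : ∀ r, Fin (d r),
        (∑ r, (i r : ℕ)) = (∑ r, (i' r : ℕ)) → v i = v i') ?_ ?_ ?_ ?_ (hT s)
    · rintro v ⟨n, -, rfl⟩ i i' hii
      rw [huapp, huapp, hii]
    · intro i i' _; rfl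
    · intro f g _ _ hf hg i i' hii
      show f i + g i = f i' + g i'
      rw [hf _ _ hii, hg _ _ hii]
    · intro a f _ hf i i' hii
      show a * f i = a * f i'
      rw [hf _ _ hii]
  have hclass : ∀ s, (∃ c t : ℂ, c ≠ 0 ∧ ∀ i : ∀ r, Fin (d r),
        ψ s i = c * t ^ (∑ r, (i r : ℕ)))
      ∨ (∀ i : ∀ r, Fin (d r), (∃ r, (i r : ℕ) ≠ d r - 1) → ψ s i = 0) := by
    intro s
    obtain ⟨x, hx⟩ := hprod s
    have hex : ∃ i₀, ψ s i₀ ≠ 0 := by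
      by_contra h; push_neg at h
      exact hne s (by ext i; exact h i)
    obtain ⟨i₀, hi₀⟩ := hex
    have hcon : ∀ i i' : ∀ r, Fin (d r),
        (∑ r, (i r : ℕ)) = (∑ r, (i' r : ℕ)) →
        ∏ r, x r (i r) = ∏ r, x r (i' r) := by
      intro i i' hii; rw [← hx, ← hx]; exact hconstψ s i i' hii
    rcases classify hk d hd x hcon i₀ (by rw [← hx]; exact hi₀) with ⟨c, t, hct⟩ | h
    · left
      refine ⟨c, t, ?_, fun i => by rw [hx]; exact hct i⟩
      intro hc0
      apply hne s
      ext i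
      rw [hx, hct i, hc0, zero_mul]
      rfl
    · right; intro i hi; rw [hx]; exact h i hi
  -- the two cases
  by_cases hG : ∀ s, ∃ c t : ℂ, c ≠ 0 ∧ ∀ i : ∀ r, Fin (d r),
      ψ s i = c * t ^ (∑ r, (i r : ℕ))
  · -- all geometric
    choose c t hc ht using hG
    have htinj : Function.Injective t := by
      intro s s' hss
      by_contra hss'
      have h0 := horthog s s' hss'
      rw [hip] at h0
      have hterm : ∀ i : ∀ r, Fin (d r), (starRingEnd ℂ) (ψ s i) * ψ s' i
          = (starRingEnd ℂ) (c s) * c s'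
            * (((Complex.normSq (t s)) ^ (∑ r, (i r : ℕ)) : ℝ) : ℂ) := by
        intro i
        rw [ht s i, ht s' i, ← hss, map_mul, map_pow]
        push_cast
        rw [Complex.normSq_eq_conj_mul_self]
        ring
      rw [Finset.sum_congr rfl (fun i _ => hterm i), ← Finset.mul_sum] at h0
      rw [← Complex.ofReal_sum] at h0
      have hpos : 0 < ∑ i : ∀ r, Fin (d r), (Complex.normSq (t s)) ^ (∑ r, (i r : ℕ)) := by
        apply Finset.sum_pos'
        · intro i _; exact pow_nonneg (Complex.normSq_nonneg _) _
        · refine ⟨fun r => ⟨0, by have := hd r; omega⟩, Finset.mem_univ _, ?_⟩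
          have : (∑ r, (((fun r => (⟨0, by have := hd r; omega⟩ : Fin (d r))) r : ℕ))) = 0 := by
            simp
          rw [this, pow_zero]; norm_num
      rcases mul_eq_zero.mp h0 with h | h
      · rcases mul_eq_zero.mp h with h' | h'
        · exact hc s (by simpa using h')
        · exact hc s' h'
      · rw [Complex.ofReal_eq_zero] at h
        exact absurd h (ne_of_gt hpos)
    have hps : ∀ s s', s ≠ s' →
        ∏ r, (∑ j ∈ Finset.range (d r), ((starRingEnd ℂ) (t s) * t s') ^ j) = 0 := by
      intro s s' h
      have h0 := horthog s s' h
      rw [hip] at h0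
      have hterm : ∀ i : ∀ r, Fin (d r), (starRingEnd ℂ) (ψ s i) * ψ s' i
          = (starRingEnd ℂ) (c s) * c s'
            * ∏ r, ((starRingEnd ℂ) (t s) * t s') ^ ((i r : ℕ)) := by
        intro i
        rw [ht s i, ht s' i, map_mul, map_pow]
        rw [Finset.prod_pow_eq_pow_sum, mul_pow]
        ring
      rw [Finset.sum_congr rfl (fun i _ => hterm i), ← Finset.mul_sum] at h0
      rw [← Fintype.prod_sum (fun r (j : Fin (d r)) =>
        ((starRingEnd ℂ) (t s) * t s') ^ (j : ℕ))] at h0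
      have hc0 : (starRingEnd ℂ) (c s) * c s' ≠ 0 :=
        mul_ne_zero (by simpa using hc s) (hc s')
      have h1 := (mul_eq_zero.mp h0).resolve_left hc0
      rw [← h1]
      exact Finset.prod_congr rfl (fun r _ =>
        (Fin.sum_univ_eq_sum_range (fun j => ((starRingEnd ℂ) (t s) * t s') ^ j) (d r)).symm)
    have hmN : m ≤ N := upb_key hk d hd t htinj hps
    -- embed Fin m into the disjoint union of Fin (d r - 1)
    have hcard : Fintype.card (Fin m) ≤ Fintype.card (Σ r : Fin k, Fin (d r - 1)) := by
      rw [Fintype.card_sigma, Fintype.card_fin]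
      simpa using hmN
    obtain ⟨f⟩ := Function.Embedding.nonempty_of_card_le hcard
    set G : Fin k → Finset (Fin m) :=
      fun r => Finset.univ.filter (fun s => (f s).1 = r) with hGdef
    have hGmem : ∀ s, s ∈ G ((f s).1) := by
      intro s; rw [hGdef]; simp
    have hGcard : ∀ r, (G r).card ≤ d r - 1 := by
      intro r
      have hinj2 : Set.InjOn (fun s => ((f s).2 : ℕ)) (G r) := by
        intro a ha b hb hab
        simp only [hGdef, Finset.coe_filter, Set.mem_setOf_eq, Finset.mem_univ,
          true_and] at ha hb
        apply f.injective
        exact Sigma.ext (ha.trans hb.symm)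
          ((Fin.heq_ext_iff (by rw [ha, hb])).mpr hab)
      calc (G r).card = ((G r).image (fun s => ((f s).2 : ℕ))).card :=
            (Finset.card_image_of_injOn hinj2).symm
      _ ≤ (Finset.range (d r - 1)).card := by
            apply Finset.card_le_card
            intro j hj
            obtain ⟨s, hs, rfl⟩ := Finset.mem_image.mp hj
            simp only [hGdef, Finset.mem_filter] at hs
            rw [Finset.mem_range]
            have h2 := ((f s).2).isLt
            have h3 : d (f s).fst - 1 = d r - 1 := by rw [hs.2]
            omega
      _ = d r - 1 := Finset.card_range _
    set q : Fin k → Polynomial ℂ :=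
      fun r => ∏ s ∈ G r, (X - C ((starRingEnd ℂ) (t s))) with hqdef
    have hqmon : ∀ r, (q r).Monic :=
      fun r => monic_prod_of_monic _ _ (fun _ _ => monic_X_sub_C _)
    have hqdeg : ∀ r, (q r).natDegree = (G r).card := by
      intro r
      rw [hqdef]
      rw [natDegree_prod _ _ (fun s _ => X_sub_C_ne_zero _)]
      simp [natDegree_X_sub_C]
    set y : ∀ r : Fin k, Fin (d r) → ℂ := fun r j => (q r).coeff (j : ℕ) with hydef
    set w : EuclideanSpace ℂ (∀ r, Fin (d r)) := WithLp.toLp 2 (fun i => ∏ r, y r (i r)) with hwdef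
    have hqdlt : ∀ r, (q r).natDegree < d r := fun r =>
      lt_of_le_of_lt (le_trans (le_of_eq (hqdeg r)) (hGcard r)) (by have := hd r; omega)
    have heval : ∀ (r : Fin k) (z : ℂ),
        ∑ j : Fin (d r), z ^ (j : ℕ) * y r j = (q r).eval z := by
      intro r z
      calc ∑ j : Fin (d r), z ^ (j : ℕ) * y r j
          = ∑ j ∈ Finset.range (d r), (q r).coeff j * z ^ j := by
            rw [← Fin.sum_univ_eq_sum_range (fun n => (q r).coeff n * z ^ n) (d r)]
            exact Finset.sum_congr rfl (fun j _ => mul_comm _ _)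
      _ = (q r).eval z := (Polynomial.eval_eq_sum_range' (hqdlt r) _).symm
    have hinner : ∀ s, (inner ℂ (ψ s) w : ℂ) = 0 := by
      intro s
      rw [hip]
      have hterm : ∀ i : ∀ r, Fin (d r), (starRingEnd ℂ) (ψ s i) * w i
          = (starRingEnd ℂ) (c s)
            * ∏ r, (((starRingEnd ℂ) (t s)) ^ ((i r : ℕ)) * y r (i r)) := by
        intro i
        rw [ht s i, map_mul, map_pow]
        rw [Finset.prod_mul_distrib, Finset.prod_pow_eq_pow_sum]
        show (starRingEnd ℂ) (c s) * _ * (∏ r, y r (i r)) = _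
        ring
      rw [Finset.sum_congr rfl (fun i _ => hterm i), ← Finset.mul_sum]
      rw [← Fintype.prod_sum (fun r (j : Fin (d r)) =>
        ((starRingEnd ℂ) (t s)) ^ (j : ℕ) * y r j)]
      have hz : ∏ r, (∑ j : Fin (d r), ((starRingEnd ℂ) (t s)) ^ (j : ℕ) * y r j) = 0 := by
        apply Finset.prod_eq_zero (Finset.mem_univ ((f s).1))
        rw [heval]
        simp only [hqdef]
        rw [eval_prod]
        apply Finset.prod_eq_zero (hGmem s)
        simp
      rw [hz, mul_zero]
    have hwmem : w ∈ (Submodule.span ℂ (Set.range ψ))ᗮ := by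
      rw [Submodule.mem_orthogonal]
      intro v hv
      refine Submodule.span_induction ?_ ?_ ?_ ?_ hv
      · rintro v ⟨s, rfl⟩; exact hinner s
      · exact inner_zero_left w
      · intro a b _ _ ha hb; rw [inner_add_left, ha, hb, add_zero]
      · intro a v _ hv'; rw [inner_smul_left, hv', mul_zero]
    have hw0 := hcomp w hwmem ⟨y, fun i => rfl⟩
    have hwit : w (fun r => ⟨(G r).card, by have := hGcard r; have := hd r; omega⟩) = 1 := by
      rw [hwdef]
      show ∏ r, y r _ = 1
      rw [Finset.prod_congr rfl (fun r _ => ?_), Finset.prod_const_one]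
      show (q r).coeff ((G r).card) = 1
      rw [← hqdeg r]
      exact (hqmon r).coeff_natDegree
    rw [hw0] at hwit
    exact one_ne_zero hwit.symm
  · -- some ψ s₀ is supported at the top index
    obtain ⟨s₀, hs₀'⟩ := not_forall.mp hG
    have hs₀ : ∀ i : ∀ r, Fin (d r), (∃ r, (i r : ℕ) ≠ d r - 1) → ψ s₀ i = 0 := by
      rcases hclass s₀ with h | h
      · exact absurd h hs₀'
      · exact h
    set top : ∀ r, Fin (d r) := fun r => ⟨d r - 1, by have := hd r; omega⟩ with htopdef
    have hnetop : ∀ i : ∀ r, Fin (d r), i ≠ top → ∃ r, (i r : ℕ) ≠ d r - 1 := by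
      intro i hit
      by_contra h; push_neg at h
      exact hit (funext fun r => Fin.ext (h r))
    have htop0 : ψ s₀ top ≠ 0 := by
      intro h
      apply hne s₀
      ext i
      by_cases hi : i = top
      · rw [hi, h]; rfl
      · rw [hs₀ i (hnetop i hi)]; rfl
    have hsupp : ∀ s (i : ∀ r, Fin (d r)), i ≠ top → (∑ r, (i r : ℕ)) ≠ 0 → ψ s i = 0 := by
      intro s i hit hiz
      by_cases hss : s = s₀
      · subst hss; exact hs₀ i (hnetop i hit)
      rcases hclass s with ⟨cs, ts, hcs, hts⟩ | h
      · have h0 := horthog s₀ s (fun h => hss h.symm)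
        rw [hip] at h0
        have hsum0 : ∑ i' : ∀ r, Fin (d r), (starRingEnd ℂ) (ψ s₀ i') * ψ s i'
            = (starRingEnd ℂ) (ψ s₀ top) * ψ s top := by
          apply Finset.sum_eq_single top
          · intro i' _ hne'
            rw [hs₀ i' (hnetop i' hne'), map_zero, zero_mul]
          · intro h; exact absurd (Finset.mem_univ top) h
        rw [hsum0] at h0
        have h1 : ψ s top = 0 :=
          (mul_eq_zero.mp h0).resolve_left (by simpa using htop0)
        have hts0 : ts = 0 := by
          rw [hts top] at h1
          rcases mul_eq_zero.mp h1 with h' | h'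
          · exact absurd h' hcs
          · have hN0 : (∑ r, ((top r : ℕ))) ≠ 0 := by
              rw [htopdef]
              show ¬ (∑ r, (d r - 1) = 0)
              omega
            exact pow_eq_zero_iff hN0 |>.mp h'
        rw [hts i, hts0, zero_pow hiz, mul_zero]
      · exact h i (hnetop i hit)
    -- build the witness product vector
    have hk0 : (0:ℕ) < k := by omega
    have hk1 : (1:ℕ) < k := by omega
    set r0 : Fin k := ⟨0, hk0⟩ with hr0
    set r1 : Fin k := ⟨1, hk1⟩ with hr1
    have hr01 : r1 ≠ r0 := by
      intro h; rw [hr0, hr1, Fin.mk.injEq] at h; omega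
    set y : ∀ r : Fin k, Fin (d r) → ℂ :=
      fun r j => if (j : ℕ) = (if r = r0 then 1 else 0) then 1 else 0 with hydef
    set w : EuclideanSpace ℂ (∀ r, Fin (d r)) := WithLp.toLp 2 (fun i => ∏ r, y r (i r)) with hwdef
    have hinner : ∀ s, (inner ℂ (ψ s) w : ℂ) = 0 := by
      intro s
      rw [hip]
      apply Finset.sum_eq_zero
      intro i _
      by_cases hit : i = top
      · have hw0 : w i = 0 := by
          rw [hwdef]
          show ∏ r, y r (i r) = 0
          apply Finset.prod_eq_zero (Finset.mem_univ r1)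
          rw [hydef, hit]
          show (if ((top r1 : ℕ)) = (if r1 = r0 then 1 else 0) then (1:ℂ) else 0) = 0
          rw [if_neg hr01, if_neg]
          rw [htopdef]
          show ¬ (d r1 - 1 = 0)
          have := hd r1; omega
        rw [hw0, mul_zero]
      by_cases hiz : (∑ r, (i r : ℕ)) = 0
      · have hi0 : (i r0 : ℕ) = 0 := by
          have := Finset.sum_eq_zero_iff.mp hiz r0 (Finset.mem_univ r0)
          exact this
        have hw0 : w i = 0 := by
          rw [hwdef]
          show ∏ r, y r (i r) = 0
          apply Finset.prod_eq_zero (Finset.mem_univ r0)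
          rw [hydef]
          show (if ((i r0 : ℕ)) = (if r0 = r0 then 1 else 0) then (1:ℂ) else 0) = 0
          rw [if_pos rfl, if_neg]
          omega
        rw [hw0, mul_zero]
      · rw [hsupp s i hit hiz, map_zero, zero_mul]
    have hwmem : w ∈ (Submodule.span ℂ (Set.range ψ))ᗮ := by
      rw [Submodule.mem_orthogonal]
      intro v hv
      refine Submodule.span_induction ?_ ?_ ?_ ?_ hv
      · rintro v ⟨s, rfl⟩; exact hinner s
      · exact inner_zero_left w
      · intro a b _ _ ha hb; rw [inner_add_left, ha, hb, add_zero]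
      · intro a v _ hv'; rw [inner_smul_left, hv', mul_zero]
    have hw0 := hcomp w hwmem ⟨y, fun i => rfl⟩
    have hwit : w (fun r => ⟨if r = r0 then 1 else 0,
        by split <;> [skip; skip] <;> (have := hd r; omega)⟩) = 1 := by
      rw [hwdef]
      show ∏ r, y r _ = 1
      rw [Finset.prod_congr rfl (fun r _ => ?_), Finset.prod_const_one]
      show (if ((if r = r0 then 1 else 0) : ℕ) = (if r = r0 then 1 else 0) then (1:ℂ) else 0) = 1
      rw [if_pos rfl]
    rw [hw0] at hwit
    exact one_ne_zero hwit.symm
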